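/- arXiv:1808.01156 — 2 statements merged into one kernel-verified Lean document; each statement's English description precedes it below -/
import Mathlib

section
/- For d independent uniform[0,1] random variables, the joint distribution function of the order statistic at a point u with 0 ≤ u_1 ≤ u_2 ≤ ··· ≤ u_d ≤ 1 equals d! times the determinant of the d×d matrix A(u) with entries a_{i,j}(u) = u_i^{j-i+1}/(j-i+1)! for i ≤ j+1 and a_{i,j}(u) = 0 otherwise. -/
open MeasureTheory

/-- The uniform distribution on `[0,1]`. -/
noncomputable def unif : Measure ℝ := volume.restrict (Set.Icc 0 1)

/-- The joint distribution of `d` i.i.d. uniform `[0,1]` random variables. -/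
noncomputable def unifPi (d : ℕ) : Measure (Fin d → ℝ) :=
  Measure.pi fun _ => unif

/-- The sorting (order statistic) map: `sortVec x` is the nondecreasing
rearrangement of the vector `x`. -/
noncomputable def sortVec {d : ℕ} (x : Fin d → ℝ) : Fin d → ℝ :=
  x ∘ Tuple.sort x

/-- The matrix `A(u)` with entries `a_{i,j}(u) = u_i^{j-i+1}/(j-i+1)!` for
`i ≤ j+1` and `0` otherwise. -/
noncomputable def orderMat (d : ℕ) (u : Fin d → ℝ) : Matrix (Fin d) (Fin d) ℝ :=
  fun i j =>
    if (i : ℕ) ≤ (j : ℕ) + 1 then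
      u i ^ ((j : ℕ) + 1 - (i : ℕ)) / (Nat.factorial ((j : ℕ) + 1 - (i : ℕ)))
    else 0

open Set



/-- The ordered region. -/
def Reg (n : ℕ) (u : Fin n → ℝ) : Set (Fin n → ℝ) :=
  {x | Monotone x ∧ (∀ i, 0 ≤ x i) ∧ ∀ i, x i ≤ u i}

lemma measurableSet_Reg (n : ℕ) (u : Fin n → ℝ) : MeasurableSet (Reg n u) := by
  have : Reg n u = (⋂ (i) (j) (_ : i ≤ j), {x : Fin n → ℝ | x i ≤ x j}) ∩
      ((⋂ i, {x : Fin n → ℝ | 0 ≤ x i}) ∩ (⋂ i, {x : Fin n → ℝ | x i ≤ u i})) := by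
    ext x
    simp only [Reg, mem_setOf_eq, mem_inter_iff, mem_iInter, Monotone]
    all_goals tauto
  rw [this]
  refine (MeasurableSet.iInter fun i => MeasurableSet.iInter fun j =>
    MeasurableSet.iInter fun _ => measurableSet_le (measurable_pi_apply i)
      (measurable_pi_apply j)).inter
    ((MeasurableSet.iInter fun i => measurableSet_le measurable_const
      (measurable_pi_apply i)).inter
     (MeasurableSet.iInter fun i => measurableSet_le (measurable_pi_apply i) measurable_const))

lemma Reg_subset_box {n : ℕ} {u : Fin n → ℝ} (h1 : ∀ i, u i ≤ 1) :
    Reg n u ⊆ Set.pi univ fun _ => Icc (0:ℝ) 1 := by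
  rintro x ⟨-, hx0, hxu⟩ i -
  exact ⟨hx0 i, le_trans (hxu i) (h1 i)⟩

lemma volume_box (n : ℕ) : volume (Set.pi univ fun _ : Fin n => Icc (0:ℝ) 1) = 1 := by
  rw [volume_pi_pi]
  simp

lemma volume_Reg_ne_top {n : ℕ} {u : Fin n → ℝ} (h1 : ∀ i, u i ≤ 1) :
    volume (Reg n u) ≠ ⊤ := by
  refine ne_top_of_le_ne_top ?_ (measure_mono (Reg_subset_box h1))
  rw [volume_box]; exact ENNReal.one_ne_top

/-- Lower bound for the next coordinate: the last entry, or `0` if none. -/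
def low : {n : ℕ} → (Fin n → ℝ) → ℝ
  | 0, _ => 0
  | _+1, r => r (Fin.last _)

lemma measurable_low {n : ℕ} : Measurable (low (n := n)) := by
  cases n with
  | zero => exact measurable_const
  | succ m => exact measurable_pi_apply _

lemma low_nonneg {n : ℕ} {u : Fin n → ℝ} {r : Fin n → ℝ} (hr : r ∈ Reg n u) : 0 ≤ low r := by
  cases n with
  | zero => exact le_refl _
  | succ m => exact hr.2.1 _

lemma low_le_one {n : ℕ} {u : Fin n → ℝ} (h1 : ∀ i, u i ≤ 1) {r : Fin n → ℝ}
    (hr : r ∈ Reg n u) : low r ≤ 1 := by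
  cases n with
  | zero => exact zero_le_one
  | succ m => exact le_trans (hr.2.2 _) (h1 _)

/-- The main integral quantity. -/
noncomputable def W : (n : ℕ) → (Fin n → ℝ) → ℕ → ℝ
  | 0, _, k => if k = 0 then 1 else 0
  | (n+1), u, k => ∫ x in Reg (n+1) u, (-(x (Fin.last n)))^k / (Nat.factorial k)

lemma Reg_zero (u : Fin 0 → ℝ) : Reg 0 u = univ := by
  ext x
  refine ⟨fun _ => trivial, fun _ => ⟨fun a => a.elim0, fun i => i.elim0, fun i => i.elim0⟩⟩

lemma W_eq (n : ℕ) (u : Fin n → ℝ) (k : ℕ) :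
    W n u k = ∫ x in Reg n u, (-(low x))^k / (Nat.factorial k) := by
  cases n with
  | zero =>
    rw [W, Reg_zero, Measure.restrict_univ]
    have : ∀ x : Fin 0 → ℝ, (-(low x))^k / (Nat.factorial k : ℝ)
        = if k = 0 then 1 else 0 := by
      intro x
      show (-(0:ℝ))^k / _ = _
      cases k with
      | zero => norm_num
      | succ m => simp
    rw [integral_congr_ae (Filter.Eventually.of_forall this), integral_const]
    have hvol : (volume : Measure (Fin 0 → ℝ)) univ = 1 := by
      rw [volume_pi, Measure.pi_univ]
      simp
    rw [measureReal_def, hvol]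
    simp
  | succ m => rfl

lemma mem_Reg_succ_iff {n : ℕ} {u : Fin (n+1) → ℝ} {x : Fin (n+1) → ℝ} :
    x ∈ Reg (n+1) u ↔ (x ∘ Fin.castSucc ∈ Reg n (u ∘ Fin.castSucc) ∧
      low (x ∘ Fin.castSucc) ≤ x (Fin.last n) ∧ x (Fin.last n) ≤ u (Fin.last n)) := by
  constructor
  · rintro ⟨hmx, hx0, hxu⟩
    refine ⟨⟨hmx.comp (fun a b h => Fin.castSucc_le_castSucc_iff.mpr h),
      fun i => hx0 _, fun i => hxu _⟩, ?_, hxu _⟩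
    cases n with
    | zero => exact hx0 _
    | succ m => exact hmx (Fin.le_last _)
  · rintro ⟨⟨hmr, hr0, hru⟩, hlow, hlast⟩
    have hub : ∀ i : Fin n, x (Fin.castSucc i) ≤ x (Fin.last n) := by
      cases n with
      | zero => exact fun i => i.elim0
      | succ m => exact fun i => le_trans (hmr (Fin.le_last i)) hlow
    have h0last : (0:ℝ) ≤ x (Fin.last n) := by
      cases n with
      | zero => exact hlow
      | succ m => exact le_trans (hr0 (Fin.last m)) (le_trans (hmr (Fin.le_last _)) hlow)
    refine ⟨?_, ?_, ?_⟩
    · intro a b hab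
      rcases Fin.eq_castSucc_or_eq_last b with ⟨b', rfl⟩ | rfl
      · rcases Fin.eq_castSucc_or_eq_last a with ⟨a', rfl⟩ | rfl
        · exact hmr (Fin.castSucc_le_castSucc_iff.mp hab)
        · have hb : Fin.last n = b'.castSucc := le_antisymm hab (Fin.le_last _)
          rw [← hb]
      · rcases Fin.eq_castSucc_or_eq_last a with ⟨a', rfl⟩ | rfl
        · exact hub a'
        · exact le_refl _
    · intro i
      rcases Fin.eq_castSucc_or_eq_last i with ⟨i', rfl⟩ | rfl
      · exact hr0 i'
      · exact h0last
    · intro i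
      rcases Fin.eq_castSucc_or_eq_last i with ⟨i', rfl⟩ | rfl
      · exact hru i'
      · exact hlast

lemma Wrec (n : ℕ) (u : Fin (n+1) → ℝ) (hm : Monotone u) (h0 : ∀ i, 0 ≤ u i)
    (h1 : ∀ i, u i ≤ 1) (k : ℕ) :
    W (n+1) u k = W n (u ∘ Fin.castSucc) (k+1)
      - (-(u (Fin.last n)))^(k+1) / (Nat.factorial (k+1)) * W n (u ∘ Fin.castSucc) 0 := by
  set c := u (Fin.last n) with hc
  set u' := u ∘ Fin.castSucc with hu'
  have hc0 : 0 ≤ c := h0 _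
  have hc1 : c ≤ 1 := h1 _
  have hu'1 : ∀ i, u' i ≤ 1 := fun i => h1 _
  have hlc : ∀ r ∈ Reg n u', low r ≤ c := by
    intro r hr
    cases n with
    | zero => exact hc0
    | succ m =>
      exact le_trans (hr.2.2 (Fin.last m)) (hm (Fin.le_last _))
  set ρ : Measure (ℝ × (Fin n → ℝ)) :=
    (volume : Measure ℝ).prod (Measure.pi fun _ : Fin n => (volume : Measure ℝ)) with hρ
  set A : Set (ℝ × (Fin n → ℝ)) := {z | z.2 ∈ Reg n u' ∧ z.1 ∈ Icc (low z.2) c} with hA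
  set g : ℝ × (Fin n → ℝ) → ℝ := fun z => (-(z.1))^k / (Nat.factorial k : ℝ) with hg
  have hAm : MeasurableSet A := by
    have : A = (Prod.snd ⁻¹' Reg n u') ∩
        ({z : ℝ × (Fin n → ℝ) | low z.2 ≤ z.1} ∩ {z : ℝ × (Fin n → ℝ) | z.1 ≤ c}) := by
      ext z
      simp only [hA, mem_setOf_eq, mem_inter_iff, mem_preimage, mem_Icc]
      all_goals tauto
    rw [this]
    exact (measurable_snd (measurableSet_Reg n u')).inter
      ((measurableSet_le (measurable_low.comp measurable_snd) measurable_fst).inter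
        (measurableSet_le measurable_fst measurable_const))
  have hAsub : A ⊆ (Icc (0:ℝ) 1) ×ˢ (Set.pi univ fun _ : Fin n => Icc (0:ℝ) 1) := by
    rintro z ⟨hz2, hz1⟩
    refine ⟨⟨le_trans (low_nonneg hz2) hz1.1, le_trans hz1.2 hc1⟩, Reg_subset_box hu'1 hz2⟩
  have hAfin : ρ A ≠ ⊤ := by
    refine ne_top_of_le_ne_top ?_ (measure_mono hAsub)
    rw [hρ, Measure.prod_prod]
    rw [show (Measure.pi fun _ : Fin n => (volume : Measure ℝ)) = volume from (volume_pi).symm,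
      volume_box, Real.volume_Icc]
    simp
  have hgm : AEStronglyMeasurable g ρ :=
    ((measurable_fst.neg.pow_const k).div_const _).aestronglyMeasurable
  have hbound : ∀ᵐ z ∂ρ.restrict A, ‖g z‖ ≤ 1 := by
    refine (ae_restrict_iff' hAm).2 (Filter.Eventually.of_forall fun z hz => ?_)
    have h01 : 0 ≤ z.1 := le_trans (low_nonneg hz.1) hz.2.1
    have h11 : z.1 ≤ 1 := le_trans hz.2.2 hc1
    have habs : |z.1| ≤ 1 := abs_le.mpr ⟨by linarith, h11⟩
    have : ‖g z‖ = |z.1|^k / (Nat.factorial k : ℝ) := by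
      rw [hg]
      simp only [norm_div, norm_pow, norm_neg, Real.norm_eq_abs]
      rw [Nat.abs_cast]
    rw [this]
    have h2 : |z.1|^k ≤ 1 := pow_le_one₀ (abs_nonneg _) habs
    have h3 : (1:ℝ) ≤ (Nat.factorial k : ℝ) := by
      exact_mod_cast Nat.one_le_iff_ne_zero.mpr (Nat.factorial_ne_zero k)
    exact div_le_one_of_le₀ (le_trans h2 h3) (by positivity)
  have hInt : Integrable (A.indicator g) ρ :=
    (Measure.integrableOn_of_bounded hAfin hgm hbound).integrable_indicator hAm
  -- Step 1 : rewrite W as an integral over the product space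
  have step1 : W (n+1) u k = ∫ z, A.indicator g z ∂ρ := by
    have hmp := measurePreserving_piFinSuccAbove (fun _ : Fin (n+1) => (volume : Measure ℝ))
      (Fin.last n)
    have key : ∀ x : Fin (n+1) → ℝ,
        A.indicator g ((MeasurableEquiv.piFinSuccAbove (fun _ : Fin (n+1) => ℝ) (Fin.last n)) x)
          = (Reg (n+1) u).indicator (fun x => (-(x (Fin.last n)))^k / (Nat.factorial k : ℝ)) x := by
      intro x
      have he : (MeasurableEquiv.piFinSuccAbove (fun _ : Fin (n+1) => ℝ) (Fin.last n)) x
          = (x (Fin.last n), x ∘ Fin.castSucc) := by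
        show (x (Fin.last n), fun j => x ((Fin.last n).succAbove j)) = _
        rw [Prod.mk.injEq]
        exact ⟨rfl, by funext j; rw [Fin.succAbove_last]; rfl⟩
      rw [he]
      by_cases hx : x ∈ Reg (n+1) u
      · have hxA : ((x (Fin.last n), x ∘ Fin.castSucc) : ℝ × (Fin n → ℝ)) ∈ A := by
          obtain ⟨hA1, hA2, hA3⟩ := mem_Reg_succ_iff.mp hx
          exact ⟨hA1, hA2, hA3⟩
        rw [indicator_of_mem hxA, indicator_of_mem hx]
      · have hxA : ((x (Fin.last n), x ∘ Fin.castSucc) : ℝ × (Fin n → ℝ)) ∉ A := by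
          intro hz
          exact hx (mem_Reg_succ_iff.mpr ⟨hz.1, hz.2.1, hz.2.2⟩)
        rw [indicator_of_notMem hxA, indicator_of_notMem hx]
    rw [W, ← integral_indicator (measurableSet_Reg (n+1) u)]
    rw [show (volume : Measure (Fin (n+1) → ℝ)) = Measure.pi fun _ => volume from volume_pi]
    rw [← hmp.integral_comp' (fun z => A.indicator g z)]
    exact (integral_congr_ae (Filter.Eventually.of_forall fun x => (key x))).symm
  rw [step1]
  -- Step 2 : Fubini
  rw [integral_prod_symm _ hInt]
  -- Step 3 : inner integral
  have step3 : ∀ r : Fin n → ℝ, (∫ t, A.indicator g (t, r)) =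
      (Reg n u').indicator
        (fun r => ((-(low r))^(k+1) - (-c)^(k+1)) / (Nat.factorial (k+1) : ℝ)) r := by
    intro r
    by_cases hr : r ∈ Reg n u'
    · have hip : ∀ t, A.indicator g (t, r) =
          (Icc (low r) c).indicator (fun t => (-t)^k / (Nat.factorial k : ℝ)) t := by
        intro t
        by_cases ht : t ∈ Icc (low r) c
        · rw [indicator_of_mem ht, indicator_of_mem (show ((t, r) : ℝ × (Fin n → ℝ)) ∈ A
            from ⟨hr, ht⟩)]
        · rw [indicator_of_notMem ht, indicator_of_notMem
            (show ((t, r) : ℝ × (Fin n → ℝ)) ∉ A from fun hz => ht hz.2)]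
      simp_rw [hip]
      rw [integral_indicator measurableSet_Icc, setIntegral_congr_set Ioc_ae_eq_Icc.symm,
        ← intervalIntegral.integral_of_le (hlc r hr)]
      rw [intervalIntegral.integral_div]
      rw [show (∫ t in (low r)..c, (-t)^k) = ∫ t in (-c)..(-(low r)), t^k from
        intervalIntegral.integral_comp_neg (fun t => t^k), integral_pow]
      rw [indicator_of_mem hr]
      rw [Nat.factorial_succ]
      have hkk : ((k:ℝ)+1) ≠ 0 := by positivity
      have hkf : ((Nat.factorial k : ℝ)) ≠ 0 := by
        exact_mod_cast Nat.factorial_ne_zero k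
      push_cast
      field_simp
      try ring
    · have : ∀ t : ℝ, A.indicator g (t, r) = 0 := fun t =>
        indicator_of_notMem (fun hz => hr hz.1) _
      simp_rw [this, integral_zero]
      rw [indicator_of_notMem hr]
  simp_rw [step3]
  rw [show (Measure.pi fun _ : Fin n => (volume : Measure ℝ)) = volume from volume_pi.symm]
  rw [integral_indicator (measurableSet_Reg n u')]
  have hfun : ∀ r : Fin n → ℝ,
      ((-(low r))^(k+1) - (-c)^(k+1)) / (Nat.factorial (k+1) : ℝ)
      = (-(low r))^(k+1) / (Nat.factorial (k+1) : ℝ)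
        - (-c)^(k+1) / (Nat.factorial (k+1) : ℝ) := fun r => sub_div _ _ _
  simp_rw [hfun]
  have hf1 : IntegrableOn
      (fun r : Fin n → ℝ => (-(low r))^(k+1) / (Nat.factorial (k+1) : ℝ))
      (Reg n u') volume := by
    refine Measure.integrableOn_of_bounded (M := 1) (volume_Reg_ne_top hu'1)
      ((measurable_low.neg.pow_const _).div_const _).aestronglyMeasurable ?_
    refine (ae_restrict_iff' (measurableSet_Reg n u')).2
      (Filter.Eventually.of_forall fun r hr => ?_)
    have habs : |low r| ≤ 1 := abs_le.mpr ⟨by linarith [low_nonneg hr], low_le_one hu'1 hr⟩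
    have hnorm : ‖(-(low r))^(k+1) / (Nat.factorial (k+1) : ℝ)‖
        = |low r|^(k+1) / (Nat.factorial (k+1) : ℝ) := by
      simp only [norm_div, norm_pow, norm_neg, Real.norm_eq_abs]
      rw [Nat.abs_cast]
    rw [hnorm]
    have h2 : |low r|^(k+1) ≤ 1 := pow_le_one₀ (abs_nonneg _) habs
    have h3 : (1:ℝ) ≤ (Nat.factorial (k+1) : ℝ) := by
      exact_mod_cast Nat.one_le_iff_ne_zero.mpr (Nat.factorial_ne_zero (k+1))
    exact div_le_one_of_le₀ (le_trans h2 h3) (by positivity)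
  have hf2 : IntegrableOn
      (fun _ : Fin n → ℝ => (-c)^(k+1) / (Nat.factorial (k+1) : ℝ)) (Reg n u') volume :=
    integrableOn_const (volume_Reg_ne_top hu'1)
  rw [integral_sub hf1 hf2, setIntegral_const]
  have hW1 : W n u' (k+1) = ∫ r in Reg n u', (-(low r))^(k+1) / (Nat.factorial (k+1) : ℝ) :=
    W_eq n u' (k+1)
  have hW0 : W n u' 0 = (volume (Reg n u')).toReal := by
    rw [W_eq]
    simp [setIntegral_const, measureReal_def]
  rw [← hW1, hW0, smul_eq_mul, measureReal_def]
  ring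

noncomputable def Bmat (n : ℕ) (u : Fin n → ℝ) (k : ℕ) : Matrix (Fin n) (Fin n) ℝ :=
  fun i j =>
    if (i : ℕ) ≤ (j : ℕ) + 1 then
      u i ^ ((j : ℕ) + 1 - (i : ℕ) + (if (j : ℕ) = n - 1 then k else 0)) /
        Nat.factorial ((j : ℕ) + 1 - (i : ℕ) + (if (j : ℕ) = n - 1 then k else 0))
    else 0

noncomputable def Ddet : (n : ℕ) → (Fin n → ℝ) → ℕ → ℝ
  | 0, _, k => if k = 0 then 1 else 0
  | (_+1), u, k => (Bmat _ u k).det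

lemma Bmat_zero (n : ℕ) (u : Fin n → ℝ) : Bmat n u 0 = orderMat n u := by
  funext i j
  simp [Bmat, orderMat]

lemma Ddet_eq_det (n : ℕ) (hn : 0 < n) (u : Fin n → ℝ) : Ddet n u 0 = (orderMat n u).det := by
  cases n with
  | zero => omega
  | succ m => rw [Ddet, Bmat_zero]


private lemma powfac_congr (x : ℝ) {a b : ℕ} (h : a = b) :
    x ^ a / (Nat.factorial a : ℝ) = x ^ b / (Nat.factorial b : ℝ) := by rw [h]

lemma Drec (n : ℕ) (u : Fin (n+1) → ℝ) (k : ℕ) :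
    Ddet (n+1) u k = u (Fin.last n) ^ (k+1) / (Nat.factorial (k+1)) *
        Ddet n (u ∘ Fin.castSucc) 0 - Ddet n (u ∘ Fin.castSucc) (k+1) := by
  cases n with
  | zero =>
    simp [Ddet, Matrix.det_fin_one, Bmat, Nat.add_comm 1 k, Fin.last]
  | succ p =>
    rw [Ddet, Matrix.det_succ_row _ (Fin.last (p+1))]
    rw [Fin.sum_univ_castSucc, Fin.sum_univ_castSucc]
    have hz : ∀ j : Fin p,
        (-1 : ℝ) ^ ((Fin.last (p+1) : ℕ) + ((j.castSucc.castSucc : Fin (p+2)) : ℕ)) *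
          Bmat (p+2) u k (Fin.last (p+1)) j.castSucc.castSucc *
          ((Bmat (p+2) u k).submatrix (Fin.last (p+1)).succAbove
            (j.castSucc.castSucc).succAbove).det = 0 := by
      intro j
      have hj : (j : ℕ) < p := j.isLt
      have : Bmat (p+2) u k (Fin.last (p+1)) j.castSucc.castSucc = 0 := by
        simp only [Bmat]
        rw [if_neg]
        simp only [Fin.coe_castSucc, Fin.val_last]
        omega
      rw [this]; ring
    rw [Finset.sum_eq_zero (fun j _ => hz j), zero_add]
    have hsub1 : ((Bmat (p+2) u k).submatrix (Fin.last (p+1)).succAbove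
        (Fin.last (p+1)).succAbove) = Bmat (p+1) (u ∘ Fin.castSucc) 0 := by
      ext i j
      have hi : (i : ℕ) < p + 1 := i.isLt
      have hj : (j : ℕ) < p + 1 := j.isLt
      simp only [Matrix.submatrix_apply, Fin.succAbove_last, Bmat, Function.comp_apply,
        Fin.coe_castSucc]
      split_ifs <;> first | rfl | omega | (apply powfac_congr; omega)
    have hsub2 : ((Bmat (p+2) u k).submatrix (Fin.last (p+1)).succAbove
        ((Fin.last p).castSucc : Fin (p+2)).succAbove) = Bmat (p+1) (u ∘ Fin.castSucc) (k+1) := by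
      ext i j
      have hi : (i : ℕ) < p + 1 := i.isLt
      have hj : (j : ℕ) < p + 1 := j.isLt
      rcases Nat.lt_or_ge (j : ℕ) p with h | h
      · have hsa : (((Fin.last p).castSucc : Fin (p+2)).succAbove j) = j.castSucc := by
          rw [Fin.succAbove_of_castSucc_lt]
          simp only [Fin.lt_def, Fin.coe_castSucc, Fin.val_last]
          exact h
        simp only [Matrix.submatrix_apply, Fin.succAbove_last, hsa, Bmat, Function.comp_apply,
          Fin.coe_castSucc]
        split_ifs <;> first | rfl | omega | (apply powfac_congr; omega)
      · have hjp : (j : ℕ) = p := by omega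
        have hsa : (((Fin.last p).castSucc : Fin (p+2)).succAbove j) = j.succ := by
          rw [Fin.succAbove_of_le_castSucc]
          simp only [Fin.le_def, Fin.coe_castSucc, Fin.val_last]
          omega
        simp only [Matrix.submatrix_apply, Fin.succAbove_last, hsa, Bmat, Function.comp_apply,
          Fin.coe_castSucc, Fin.val_succ]
        split_ifs <;> first | rfl | omega | (apply powfac_congr; omega)
    rw [hsub1, hsub2]
    have e1 : Bmat (p+2) u k (Fin.last (p+1)) (Fin.last (p+1)) =
        u (Fin.last (p+1)) ^ (k+1) / (Nat.factorial (k+1)) := by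
      simp only [Bmat, Fin.val_last]
      rw [if_pos (show p+1 ≤ p+1+1 by omega), if_pos (show p+1 = p+2-1 by omega)]
      apply powfac_congr; omega
    have e2 : Bmat (p+2) u k (Fin.last (p+1)) ((Fin.last p).castSucc) = 1 := by
      simp only [Bmat, Fin.val_last, Fin.coe_castSucc]
      rw [if_pos (show p+1 ≤ p+1 by omega), if_neg (show ¬ ((p:ℕ) = p+2-1) by omega)]
      norm_num
    rw [e1, e2]
    simp only [Fin.val_last, Fin.coe_castSucc]
    have hs1 : (-1 : ℝ) ^ ((p+1) + (p+1)) = 1 := by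
      exact Even.neg_one_pow ⟨p+1, by ring⟩
    have hs2 : (-1 : ℝ) ^ ((p+1) + p) = -1 := by
      have : (p+1) + p = 2*p + 1 := by ring
      rw [this, pow_succ, pow_mul]; norm_num
    rw [hs1, hs2]
    simp only [Ddet]
    ring


instance : SigmaFinite unif := by unfold unif; infer_instance

lemma unifPi_eq_restrict (d : ℕ) :
    unifPi d = (volume : Measure (Fin d → ℝ)).restrict (Set.pi univ fun _ => Icc 0 1) := by
  rw [unifPi]
  apply Measure.pi_eq
  intro s hs
  rw [Measure.restrict_apply (MeasurableSet.univ_pi hs)]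
  rw [show (Set.pi univ s) ∩ (Set.pi univ fun _ => Icc (0:ℝ) 1)
      = Set.pi univ (fun i => s i ∩ Icc (0:ℝ) 1) from
      (pi_inter_distrib (s := (univ : Set (Fin d))) (t := s) (t₁ := fun _ => Icc (0:ℝ) 1)).symm]
  rw [volume_pi_pi]
  refine Finset.prod_congr rfl fun i _ => ?_
  rw [unif, Measure.restrict_apply (hs i)]

lemma sortVec_le_iff {d : ℕ} (x : Fin d → ℝ) (m : Fin d) (c : ℝ) :
    sortVec x m ≤ c ↔ ∃ T : Finset (Fin d), (m:ℕ)+1 ≤ T.card ∧ ∀ j ∈ T, x j ≤ c := by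
  constructor
  · intro h
    refine ⟨(Finset.Iic m).image (Tuple.sort x), ?_, ?_⟩
    · rw [Finset.card_image_of_injective _ (Equiv.injective _), Fin.card_Iic]
    · rintro j hj
      simp only [Finset.mem_image, Finset.mem_Iic] at hj
      obtain ⟨i, hi, rfl⟩ := hj
      exact le_trans (Tuple.monotone_sort x hi) h
  · rintro ⟨T, hcard, hT⟩
    have hcard' : (m:ℕ)+1 ≤ (T.image (Tuple.sort x).symm).card := by
      rwa [Finset.card_image_of_injective _ (Equiv.injective _)]
    have : ∃ i ∈ T.image (Tuple.sort x).symm, m ≤ i := by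
      by_contra hcon
      push_neg at hcon
      have hsub : T.image (Tuple.sort x).symm ⊆ Finset.Iio m := by
        intro i hi
        exact Finset.mem_Iio.mpr (hcon i hi)
      have := Finset.card_le_card hsub
      rw [Fin.card_Iio] at this
      omega
    obtain ⟨i, hi, hmi⟩ := this
    simp only [Finset.mem_image] at hi
    obtain ⟨j, hj, rfl⟩ := hi
    calc sortVec x m ≤ sortVec x ((Tuple.sort x).symm j) := Tuple.monotone_sort x hmi
    _ = x j := by simp [sortVec]
    _ ≤ c := hT j hj

lemma measurable_sortVec {d : ℕ} : Measurable (sortVec (d := d)) := by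
  refine measurable_pi_lambda _ fun m => measurable_of_Iic fun c => ?_
  have : (fun x => sortVec x m) ⁻¹' (Iic c) =
      ⋃ (T : Finset (Fin d)) (_ : (m:ℕ)+1 ≤ T.card), ⋂ (j ∈ T), {x : Fin d → ℝ | x j ≤ c} := by
    ext x
    simp only [mem_preimage, mem_Iic, sortVec_le_iff, mem_iUnion, mem_iInter, mem_setOf_eq]
    tauto
  rw [this]
  exact MeasurableSet.iUnion fun T => MeasurableSet.iUnion fun _ =>
    MeasurableSet.biInter (Set.to_countable _) fun j _ =>
      measurableSet_le (measurable_pi_apply j) measurable_const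

lemma sortVec_comp_perm {d : ℕ} (x : Fin d → ℝ) (σ : Equiv.Perm (Fin d)) :
    sortVec (x ∘ σ) = sortVec x := Tuple.comp_perm_comp_sort_eq_comp_sort

lemma sortVec_eq_of_monotone {d : ℕ} {x : Fin d → ℝ} {σ : Equiv.Perm (Fin d)}
    (h : Monotone (x ∘ σ)) : sortVec x = x ∘ σ :=
  (Tuple.comp_sort_eq_comp_iff_monotone.mpr h).symm

lemma volume_eqset {n : ℕ} {i j : Fin n} (hij : i ≠ j) :
    volume {x : Fin n → ℝ | x i = x j} = 0 := by
  cases n with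
  | zero => exact i.elim0
  | succ m =>
    obtain ⟨j', hj'⟩ := Fin.exists_succAbove_eq (Ne.symm hij)
    set e := MeasurableEquiv.piFinSuccAbove (fun _ : Fin (m+1) => ℝ) i with he
    set B : Set (ℝ × (Fin m → ℝ)) := {z | z.1 = z.2 j'} with hB
    have hBm : MeasurableSet B :=
      measurableSet_eq_fun measurable_fst ((measurable_pi_apply j').comp measurable_snd)
    have hset : {x : Fin (m+1) → ℝ | x i = x j} = e ⁻¹' B := by
      ext x
      simp only [mem_setOf_eq, mem_preimage, hB]
      show x i = x j ↔ (e x).1 = (e x).2 j'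
      have h1 : (e x).1 = x i := rfl
      have h2 : (e x).2 j' = x (i.succAbove j') := rfl
      rw [h1, h2, hj']
    have hmp := measurePreserving_piFinSuccAbove (fun _ : Fin (m+1) => (volume : Measure ℝ)) i
    rw [show (volume : Measure (Fin (m+1) → ℝ)) = Measure.pi fun _ => volume from volume_pi,
      hset, hmp.measure_preimage hBm.nullMeasurableSet]
    rw [Measure.prod_apply hBm]
    have : ∀ t : ℝ, (Measure.pi fun _ : Fin m => (volume : Measure ℝ))
        (Prod.mk t ⁻¹' B) = 0 := by
      intro t
      have : Prod.mk t ⁻¹' B = {r : Fin m → ℝ | r j' = t} := by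
        ext r
        simp only [mem_preimage, hB, mem_setOf_eq]
        exact eq_comm
      rw [this]
      exact Measure.pi_hyperplane (fun _ : Fin m => (volume : Measure ℝ)) j' t
    simp [this]

lemma mp_perm {d : ℕ} (σ : Equiv.Perm (Fin d)) :
    MeasurePreserving (fun x : Fin d → ℝ => x ∘ σ) volume volume := by
  have h := volume_measurePreserving_piCongrLeft (fun _ : Fin d => ℝ) σ.symm
  have hfun : (fun x : Fin d → ℝ => x ∘ σ)
      = (MeasurableEquiv.piCongrLeft (fun _ : Fin d => ℝ) σ.symm) := by
    funext x
    simp [MeasurableEquiv.piCongrLeft, Equiv.piCongrLeft, Equiv.piCongrLeft']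
    rfl
  rw [hfun]
  exact h

lemma W_eq_D (n : ℕ) (u : Fin n → ℝ) (hm : Monotone u) (h0 : ∀ i, 0 ≤ u i)
    (h1 : ∀ i, u i ≤ 1) (k : ℕ) : W n u k = (-1:ℝ)^k * Ddet n u k := by
  induction n generalizing k with
  | zero =>
    cases k with
    | zero => simp [W, Ddet]
    | succ m => simp [W, Ddet]
  | succ n ih =>
    have hm' : Monotone (u ∘ Fin.castSucc) :=
      hm.comp fun a b h => Fin.castSucc_le_castSucc_iff.mpr h
    rw [Wrec n u hm h0 h1 k, Drec n u k,
      ih (u ∘ Fin.castSucc) hm' (fun i => h0 _) (fun i => h1 _) (k+1),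
      ih (u ∘ Fin.castSucc) hm' (fun i => h0 _) (fun i => h1 _) 0]
    rw [show (-(u (Fin.last n)))^(k+1) = (-1:ℝ)^(k+1) * (u (Fin.last n))^(k+1) from by
      rw [neg_pow]]
    ring

theorem stmt8 (d : ℕ) (hd : 0 < d) (u : Fin d → ℝ)
    (hmono : Monotone u) (h0 : ∀ i, 0 ≤ u i) (h1 : ∀ i, u i ≤ 1) :
    ((((unifPi d).map sortVec) {y | ∀ i, y i ≤ u i}).toReal)
      = (Nat.factorial d : ℝ) * (orderMat d u).det := by
  set S : Set (Fin d → ℝ) := {y | ∀ i, y i ≤ u i} with hS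
  have hSm : MeasurableSet S := by
    have : S = ⋂ i, {y : Fin d → ℝ | y i ≤ u i} := by ext y; simp [hS]
    rw [this]
    exact MeasurableSet.iInter fun i =>
      measurableSet_le (measurable_pi_apply i) measurable_const
  rw [Measure.map_apply measurable_sortVec hSm, unifPi_eq_restrict]
  set box := Set.pi univ fun _ : Fin d => Icc (0:ℝ) 1 with hbox
  have hbox_iff : ∀ y : Fin d → ℝ, y ∈ box ↔ ∀ i, y i ∈ Icc (0:ℝ) 1 := fun y => by
    simp [hbox, Pi.le_def, forall_and]
  have hEm : MeasurableSet (sortVec ⁻¹' S) := measurable_sortVec hSm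
  rw [Measure.restrict_apply hEm]
  set N : Set (Fin d → ℝ) := ⋃ (i) (j) (_ : i ≠ j), {x : Fin d → ℝ | x i = x j} with hN
  have hNnull : volume N = 0 := by
    rw [hN]
    exact measure_iUnion_null fun i => measure_iUnion_null fun j =>
      measure_iUnion_null fun hij => volume_eqset hij
  have hinj_of_not_mem_N : ∀ x : Fin d → ℝ, x ∉ N → Function.Injective x := by
    intro x hxN a b hab
    by_contra hne
    exact hxN (mem_iUnion.mpr ⟨a, mem_iUnion.mpr ⟨b, mem_iUnion.mpr ⟨hne, hab⟩⟩⟩)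
  set G : Set (Fin d → ℝ) := {y | StrictMono y} ∩ (S ∩ box) with hG
  have hGm : MeasurableSet G := by
    have hsm : {y : Fin d → ℝ | StrictMono y} =
        ⋂ (i) (j) (_ : i < j), {y : Fin d → ℝ | y i < y j} := by
      ext y
      simp only [mem_setOf_eq, mem_iInter, StrictMono]
    have hboxm : MeasurableSet box := MeasurableSet.univ_pi fun _ => measurableSet_Icc
    rw [hG, hsm]
    exact ((MeasurableSet.iInter fun i => MeasurableSet.iInter fun j =>
      MeasurableSet.iInter fun _ => measurableSet_lt (measurable_pi_apply i)
        (measurable_pi_apply j)).inter (hSm.inter hboxm))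
  set piece : Equiv.Perm (Fin d) → Set (Fin d → ℝ) := fun σ => (fun x => x ∘ σ) ⁻¹' G
    with hpiece
  have hmeas_comp : ∀ σ : Equiv.Perm (Fin d), Measurable (fun x : Fin d → ℝ => x ∘ σ) :=
    fun σ => measurable_pi_lambda _ fun i => measurable_pi_apply _
  have hpm : ∀ σ, MeasurableSet (piece σ) := fun σ => hmeas_comp σ hGm
  have hsub : ∀ σ, piece σ ⊆ sortVec ⁻¹' S ∩ box := by
    rintro σ x ⟨hsm, hsS, hsbox⟩
    have hsort : sortVec x = x ∘ σ := sortVec_eq_of_monotone hsm.monotone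
    constructor
    · show sortVec x ∈ S
      rw [hsort]; exact hsS
    · rw [hbox_iff]
      intro i
      have := (hbox_iff _).mp hsbox (σ.symm i)
      simpa using this
  have hcover : (sortVec ⁻¹' S ∩ box) \ N ⊆ ⋃ σ, piece σ := by
    rintro x ⟨⟨hxS, hxbox⟩, hxN⟩
    have hinj : Function.Injective x := hinj_of_not_mem_N x hxN
    refine mem_iUnion.mpr ⟨Tuple.sort x, ?_, ?_, ?_⟩
    · exact (Tuple.monotone_sort x).strictMono_of_injective
        (hinj.comp (Equiv.injective _))
    · exact hxS
    · rw [hbox_iff]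
      intro i
      exact (hbox_iff _).mp hxbox _
  have hdisj : Pairwise (Function.onFun Disjoint piece) := by
    intro σ τ hst
    refine Set.disjoint_left.mpr fun x hxσ hxτ => hst ?_
    obtain ⟨hsm1, -, -⟩ := hxσ
    obtain ⟨hsm2, -, -⟩ := hxτ
    have h1 : sortVec x = x ∘ σ := sortVec_eq_of_monotone hsm1.monotone
    have h2 : sortVec x = x ∘ τ := sortVec_eq_of_monotone hsm2.monotone
    have hinj : Function.Injective x := by
      have hinj1 : Function.Injective (x ∘ σ) := hsm1.injective
      have hx : x = (x ∘ σ) ∘ (σ.symm : Fin d → Fin d) := by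
        funext a; simp
      rw [hx]
      exact hinj1.comp σ.symm.injective
    ext a
    exact congrArg Fin.val (hinj (congrFun (h1.symm.trans h2) a))
  have hvol : volume (sortVec ⁻¹' S ∩ box) = ∑ σ : Equiv.Perm (Fin d), volume (piece σ) := by
    have h1 : volume (sortVec ⁻¹' S ∩ box) = volume ((sortVec ⁻¹' S ∩ box) \ N) :=
      (measure_diff_null hNnull).symm
    have h2 : (sortVec ⁻¹' S ∩ box) \ N = (⋃ σ, piece σ) \ N := by
      apply Subset.antisymm
      · intro x hx
        exact ⟨hcover hx, hx.2⟩
      · rintro x ⟨hx1, hx2⟩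
        obtain ⟨σ, hσ⟩ := mem_iUnion.mp hx1
        exact ⟨hsub σ hσ, hx2⟩
    rw [h1, h2, measure_diff_null hNnull, measure_iUnion hdisj hpm, tsum_fintype]
  have hpiecevol : ∀ σ, volume (piece σ) = volume G := fun σ =>
    (mp_perm σ).measure_preimage hGm.nullMeasurableSet
  have hGReg : volume G = volume (Reg d u) := by
    apply le_antisymm
    · apply measure_mono
      rintro y ⟨hsm, hyS, hybox⟩
      exact ⟨hsm.monotone, fun i => ((hbox_iff _).mp hybox i).1, fun i => hyS i⟩
    · have hsub2 : Reg d u ⊆ G ∪ N := by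
        intro y hy
        by_cases hyN : y ∈ N
        · exact Or.inr hyN
        · left
          refine ⟨hy.1.strictMono_of_injective (hinj_of_not_mem_N y hyN),
            fun i => hy.2.2 i, ?_⟩
          rw [hbox_iff]
          exact fun i => ⟨hy.2.1 i, le_trans (hy.2.2 i) (h1 i)⟩
      calc volume (Reg d u) ≤ volume (G ∪ N) := measure_mono hsub2
        _ ≤ volume G + volume N := measure_union_le _ _
        _ = volume G := by rw [hNnull, add_zero]
  rw [hvol, Finset.sum_congr rfl (fun σ _ => (hpiecevol σ).trans hGReg), Finset.sum_const,
    Finset.card_univ, Fintype.card_perm, Fintype.card_fin]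
  rw [nsmul_eq_mul, ENNReal.toReal_mul, ENNReal.toReal_natCast]
  have hWvol : (volume (Reg d u)).toReal = W d u 0 := by
    rw [W_eq]
    simp [setIntegral_const, measureReal_def]
  rw [hWvol, W_eq_D d u hmono h0 h1 0, pow_zero, one_mul, Ddet_eq_det d hd u]
end

section
/- For independent uniform[0,1] random variables X_1,...,X_d with d ≥ 2, the multivariate Kendall's tau of the order statistic vector equals (2^d - (d+1)) / ((2^{d-1} - 1)(d + 1)), and in particular is strictly positive. -/
open MeasureTheory

/-- `[C_T, C_T]` for the product copula: the probability that the order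
statistic of an independent copy is dominated coordinatewise, i.e.
`P(T(V) ≤ T(U))` for `U, V` independent uniform on `[0,1]^d`. -/
noncomputable def biformOrder (d : ℕ) : ℝ :=
  ∫ u, ((unifPi d) {v | ∀ i, sortVec v i ≤ sortVec u i}).toReal ∂(unifPi d)

open scoped ENNReal

instance : IsProbabilityMeasure unif := by
  constructor
  rw [unif, Measure.restrict_apply MeasurableSet.univ, Set.univ_inter, Real.volume_Icc]
  norm_num

instance : NullSingletonClass unif := by
  unfold unif; infer_instance

instance (d : ℕ) : IsProbabilityMeasure (unifPi d) := by
  unfold unifPi; infer_instance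

/-- number of coordinates ≤ t -/
noncomputable def cnt {d : ℕ} (x : Fin d → ℝ) (t : ℝ) : ℕ :=
  (Finset.univ.filter fun j => x j ≤ t).card

lemma cnt_comp_perm {d : ℕ} (x : Fin d → ℝ) (σ : Equiv.Perm (Fin d)) (t : ℝ) :
    cnt (x ∘ σ) t = cnt x t := by
  unfold cnt
  apply Finset.card_bij' (fun j _ => σ j) (fun j _ => σ.symm j) <;>
    simp [Function.comp]

lemma monotone_le_iff_cnt {d : ℕ} {g : Fin d → ℝ} (hg : Monotone g) (i : Fin d) (c : ℝ) :
    g i ≤ c ↔ (i : ℕ) + 1 ≤ cnt g c := by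
  constructor
  · intro h
    have hsub : Finset.Iic i ⊆ Finset.univ.filter fun j => g j ≤ c := by
      intro j hj
      simp only [Finset.mem_Iic] at hj
      simp only [Finset.mem_filter, Finset.mem_univ, true_and]
      exact le_trans (hg hj) h
    have := Finset.card_le_card hsub
    rwa [Fin.card_Iic] at this
  · intro h
    by_contra hc
    push_neg at hc
    have hsub : (Finset.univ.filter fun j => g j ≤ c) ⊆ Finset.Iio i := by
      intro j hj
      simp only [Finset.mem_filter, Finset.mem_univ, true_and] at hj
      simp only [Finset.mem_Iio]
      by_contra hji
      push_neg at hji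
      exact absurd (le_trans (hg hji) hj) (not_le.mpr hc)
    have h2 : cnt g c ≤ (i : ℕ) := by
      rw [cnt]
      have := Finset.card_le_card hsub
      rwa [Fin.card_Iio] at this
    omega

lemma sortVec_le_iff_s10 {d : ℕ} (x : Fin d → ℝ) (i : Fin d) (c : ℝ) :
    sortVec x i ≤ c ↔ (i : ℕ) + 1 ≤ cnt x c := by
  rw [show sortVec x i = (x ∘ Tuple.sort x) i from rfl,
    monotone_le_iff_cnt (Tuple.monotone_sort x) i c]
  rw [show (x ∘ ⇑(Tuple.sort x)) = x ∘ (Tuple.sort x : Equiv.Perm (Fin d)) from rfl,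
    cnt_comp_perm]

lemma sort_dom_iff {d : ℕ} (u v : Fin d → ℝ) :
    (∀ i, sortVec v i ≤ sortVec u i) ↔ ∀ t : ℝ, cnt u t ≤ cnt v t := by
  constructor
  · intro h t
    rcases Nat.eq_zero_or_pos (cnt u t) with h0 | hpos
    · simp [h0]
    · set k := cnt u t with hk
      have hkd : k ≤ d := by
        rw [hk]; unfold cnt
        exact le_trans (Finset.card_le_card (Finset.filter_subset _ _)) (by simp)
      have hi : k - 1 < d := by omega
      set i : Fin d := ⟨k - 1, hi⟩ with hidef
      have hui : sortVec u i ≤ t := by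
        rw [sortVec_le_iff_s10]
        simp only [hidef]
        omega
      have hvi : sortVec v i ≤ t := le_trans (h i) hui
      rw [sortVec_le_iff_s10] at hvi
      simp only [hidef] at hvi
      omega
  · intro h i
    rw [sortVec_le_iff_s10]
    exact le_trans ((sortVec_le_iff_s10 u i _).mp le_rfl) (h _)


lemma measurable_cnt {d : ℕ} (t : ℝ) : Measurable fun x : Fin d → ℝ => cnt x t := by
  have : (fun x : Fin d → ℝ => cnt x t)
      = fun x => ∑ j : Fin d, if x j ≤ t then 1 else 0 := by
    funext x
    rw [cnt, Finset.card_filter]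
  rw [this]
  exact Finset.measurable_sum _ fun j _ =>
    Measurable.ite ((measurable_pi_apply j) measurableSet_Iic) measurable_const
      measurable_const

lemma measurable_sortVec_s10 {d : ℕ} (i : Fin d) : Measurable fun x : Fin d → ℝ => sortVec x i := by
  apply measurable_of_Iic
  intro c
  have : (fun x : Fin d → ℝ => sortVec x i) ⁻¹' Set.Iic c
      = (fun x : Fin d → ℝ => cnt x c) ⁻¹' Set.Ici ((i : ℕ) + 1) := by
    ext x
    simp [sortVec_le_iff_s10]
  rw [this]
  exact measurable_cnt c measurableSet_Ici

lemma measurableSet_S (d : ℕ) :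
    MeasurableSet {p : (Fin d → ℝ) × (Fin d → ℝ) | ∀ i, sortVec p.2 i ≤ sortVec p.1 i} := by
  have : {p : (Fin d → ℝ) × (Fin d → ℝ) | ∀ i, sortVec p.2 i ≤ sortVec p.1 i}
      = ⋂ i, {p : (Fin d → ℝ) × (Fin d → ℝ) | sortVec p.2 i ≤ sortVec p.1 i} := by
    ext p; simp
  rw [this]
  exact MeasurableSet.iInter fun i =>
    measurableSet_le ((measurable_sortVec_s10 i).comp measurable_snd)
      ((measurable_sortVec_s10 i).comp measurable_fst)

lemma biformOrder_eq_prod (d : ℕ) :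
    biformOrder d = (((unifPi d).prod (unifPi d))
      {p | ∀ i, sortVec p.2 i ≤ sortVec p.1 i}).toReal := by
  rw [biformOrder, Measure.prod_apply (measurableSet_S d)]
  rw [← integral_toReal]
  · rfl
  · exact (measurable_measure_prodMk_left (measurableSet_S d)).aemeasurable
  · filter_upwards with u
    exact lt_of_le_of_lt prob_le_one (by norm_num)


/-- index type -/
abbrev OSI (d : ℕ) := Fin d ⊕ Fin d
noncomputable def muI (d : ℕ) : Measure (OSI d → ℝ) := Measure.pi fun _ => unif
instance (d : ℕ) : IsProbabilityMeasure (muI d) := by unfold muI; infer_instance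

/-- the ranking event -/
def E {d : ℕ} (e : Fin (d + d) ≃ OSI d) : Set (OSI d → ℝ) := {w | StrictMono (w ∘ e)}

lemma measurableSet_E {d : ℕ} (e : Fin (d + d) ≃ OSI d) : MeasurableSet (E e) := by
  have : E e = ⋂ (a : Fin (d + d)) (b : Fin (d + d)) (_ : a < b),
      {w : OSI d → ℝ | w (e a) < w (e b)} := by
    ext w
    constructor
    · intro hw
      simp only [Set.mem_iInter, Set.mem_setOf_eq]
      intro a b hab
      exact hw hab
    · intro hw
      simp only [Set.mem_iInter, Set.mem_setOf_eq] at hw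
      intro a b hab
      exact hw a b hab
  rw [this]
  exact MeasurableSet.iInter fun a => MeasurableSet.iInter fun b => MeasurableSet.iInter
    fun _ => measurableSet_lt (measurable_pi_apply _) (measurable_pi_apply _)

lemma E_disjoint {d : ℕ} : Pairwise (Function.onFun Disjoint (E (d := d))) := by
  intro e e' hne
  rw [Function.onFun, Set.disjoint_left]
  intro w hw hw'
  have hinj : Function.Injective w := by
    intro x y hxy
    have h1 : (w ∘ e) (e.symm x) = (w ∘ e) (e.symm y) := by
      simp [Function.comp, hxy]
    have := hw.injective h1
    have := congrArg e this
    simpa using this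
  have hr : Set.range (w ∘ e) = Set.range (w ∘ e') := by
    rw [Set.range_comp, Set.range_comp, Equiv.range_eq_univ, Equiv.range_eq_univ]
  haveI i1 : WellFoundedLT (Fin (d + d)) := inferInstance
  have := (@StrictMono.range_inj (Fin (d + d)) ℝ _ _ i1 (w ∘ e) (w ∘ e') hw hw').mp hr
  apply hne
  ext k
  exact hinj (congrFun this k)

lemma pair_null {d : ℕ} (i j : OSI d) (hij : i ≠ j) : muI d {w | w i = w j} = 0 := by
  classical
  set p : OSI d → Prop := fun x => x = i with hp
  have hmp := measurePreserving_piEquivPiSubtypeProd (fun _ : OSI d => unif) p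
  set eqv := MeasurableEquiv.piEquivPiSubtypeProd (fun _ : OSI d => ℝ) p
  set T : Set ((∀ _ : {x // p x}, ℝ) × (∀ _ : {x // ¬ p x}, ℝ)) :=
    {q | q.1 ⟨i, rfl⟩ = q.2 ⟨j, fun h => hij (h ▸ rfl)⟩} with hT
  have hTm : MeasurableSet T :=
    measurableSet_eq_fun
      ((measurable_pi_apply (⟨i, rfl⟩ : {x // p x})).comp' measurable_fst)
      ((measurable_pi_apply (⟨j, fun h => hij (h ▸ rfl)⟩ : {x // ¬ p x})).comp' measurable_snd)
  have hpre : eqv ⁻¹' T = {w | w i = w j} := by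
    ext w
    rfl
  have := hmp.measure_preimage hTm.nullMeasurableSet
  rw [hpre] at this
  rw [muI, this, Measure.prod_apply hTm]
  have hz : ∀ a : (∀ _ : {x // p x}, ℝ),
      (Measure.pi fun _ : {x // ¬ p x} => unif) (Prod.mk a ⁻¹' T) = 0 := by
    intro a
    have : Prod.mk a ⁻¹' T = {b : ∀ _ : {x // ¬ p x}, ℝ |
        b ⟨j, fun h => hij (h ▸ rfl)⟩ = a ⟨i, rfl⟩} := by
      ext b
      simp [hT, eq_comm]
    rw [this]
    exact Measure.pi_hyperplane _ _ _
  simp only [hz]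
  simp

lemma null_noninj (d : ℕ) : muI d {w | ¬ Function.Injective w} = 0 := by
  have hsub : {w : OSI d → ℝ | ¬ Function.Injective w} ⊆
      ⋃ (q : OSI d × OSI d) (_ : q.1 ≠ q.2), {w | w q.1 = w q.2} := by
    intro w hw
    simp only [Set.mem_setOf_eq, Function.Injective] at hw
    push_neg at hw
    obtain ⟨x, y, hxy, hne⟩ := hw
    exact Set.mem_iUnion.mpr ⟨(x, y), Set.mem_iUnion.mpr ⟨hne, hxy⟩⟩
  refine measure_mono_null hsub ?_
  refine measure_iUnion_null fun q => ?_
  by_cases hq : q.1 ≠ q.2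
  · exact measure_mono_null (Set.iUnion_subset fun _ => subset_rfl) (pair_null q.1 q.2 hq)
  · have : (⋃ (_ : q.1 ≠ q.2), {w : OSI d → ℝ | w q.1 = w q.2}) = ∅ := by
      ext w
      simp only [Set.mem_iUnion, Set.mem_empty_iff_false, iff_false, not_exists]
      intro h _
      exact hq h
    rw [this]
    simp

lemma exists_E (d : ℕ) {w : OSI d → ℝ} (hw : Function.Injective w) :
    ∃ e : Fin (d + d) ≃ OSI d, w ∈ E e := by
  let e₀ : Fin (d + d) ≃ OSI d := finSumFinEquiv.symm
  let f : Fin (d + d) → ℝ := w ∘ e₀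
  refine ⟨(Tuple.sort f).trans e₀, ?_⟩
  have : w ∘ ((Tuple.sort f).trans e₀) = f ∘ Tuple.sort f := rfl
  rw [E, Set.mem_setOf_eq, this]
  exact (Tuple.monotone_sort f).strictMono_of_injective
    ((hw.comp e₀.injective).comp (Tuple.sort f).injective)

lemma mp_comp_perm {ι : Type*} [Fintype ι] (σ : ι ≃ ι) :
    MeasurePreserving (fun w : ι → ℝ => w ∘ σ)
      (Measure.pi fun _ => unif) (Measure.pi fun _ => unif) := by
  have key : ⇑(MeasurableEquiv.piCongrLeft (fun _ : ι => ℝ) σ.symm)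
      = fun w : ι → ℝ => w ∘ σ := by
    funext w
    funext b
    have h2 := Equiv.piCongrLeft_apply_apply (fun _ : ι => ℝ) σ.symm w (σ b)
    rw [Equiv.symm_apply_apply] at h2
    exact h2
  have := measurePreserving_piCongrLeft (fun _ : ι => unif) σ.symm
  rwa [key] at this

lemma measure_E_const {d : ℕ} (e e' : Fin (d + d) ≃ OSI d) :
    muI d (E e) = muI d (E e') := by
  have hpre : E e = (fun w : OSI d → ℝ => w ∘ (e'.symm.trans e)) ⁻¹' E e' := by
    ext w
    simp only [E, Set.mem_preimage, Set.mem_setOf_eq]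
    have : (w ∘ (e'.symm.trans e)) ∘ e' = w ∘ e := by
      funext k
      simp [Function.comp]
    rw [this]
  rw [hpre]
  exact (mp_comp_perm (e'.symm.trans e)).measure_preimage
    (measurableSet_E e').nullMeasurableSet

lemma measure_E_eq {d : ℕ} (e : Fin (d + d) ≃ OSI d) :
    ((d + d).factorial : ℝ≥0∞) * muI d (E e) = 1 := by
  classical
  have hcover : muI d (⋃ e' : Fin (d + d) ≃ OSI d, E e') = 1 := by
    have hmU : MeasurableSet (⋃ e' : Fin (d + d) ≃ OSI d, E e') :=
      MeasurableSet.iUnion fun e' => measurableSet_E e'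
    have hcompl : muI d (⋃ e' : Fin (d + d) ≃ OSI d, E e')ᶜ = 0 := by
      refine measure_mono_null ?_ (null_noninj d)
      intro w hw
      simp only [Set.mem_compl_iff, Set.mem_iUnion, not_exists] at hw
      intro hinj
      obtain ⟨e', he'⟩ := exists_E d hinj
      exact hw e' he'
    have := measure_add_measure_compl (μ := muI d) hmU
    rw [hcompl, add_zero, measure_univ] at this
    exact this
  have hsum : ∑ e' : Fin (d + d) ≃ OSI d, muI d (E e')
      = muI d (⋃ e' : Fin (d + d) ≃ OSI d, E e') := by
    rw [measure_iUnion E_disjoint fun e' => measurableSet_E e', tsum_fintype]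
  have hconst : ∀ e' : Fin (d + d) ≃ OSI d, muI d (E e') = muI d (E e) :=
    fun e' => measure_E_const e' e
  rw [Finset.sum_congr rfl (fun e' _ => hconst e'), Finset.sum_const, Finset.card_univ] at hsum
  rw [hcover] at hsum
  have hcard : Fintype.card (Fin (d + d) ≃ OSI d) = (d + d).factorial := by
    rw [Fintype.card_equiv (finSumFinEquiv.symm), Fintype.card_fin]
  rw [hcard] at hsum
  rw [← hsum, nsmul_eq_mul]


-- new content
def Aset (d : ℕ) : Set (OSI d → ℝ) :=
  {w | ∀ i, sortVec (fun i => w (Sum.inr i)) i ≤ sortVec (fun i => w (Sum.inl i)) i}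

def ballotW {N : ℕ} (s : Fin N → Bool) : Prop :=
  ∀ k : ℕ, (Finset.univ.filter fun j : Fin N => (j : ℕ) < k ∧ s j = false).card
         ≤ (Finset.univ.filter fun j : Fin N => (j : ℕ) < k ∧ s j = true).card

def wrd {d : ℕ} (e : Fin (d + d) ≃ OSI d) : Fin (d + d) → Bool := fun j => (e j).isRight

lemma cnt_side {d : ℕ} (w : OSI d → ℝ) (e : Fin (d + d) ≃ OSI d) (t : ℝ) :
    cnt (fun i => w (Sum.inl i)) t
        = (Finset.univ.filter fun j : Fin (d + d) => w (e j) ≤ t ∧ wrd e j = false).card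
      ∧ cnt (fun i => w (Sum.inr i)) t
        = (Finset.univ.filter fun j : Fin (d + d) => w (e j) ≤ t ∧ wrd e j = true).card := by
  classical
  constructor
  · rw [cnt]
    apply Finset.card_bij (fun i _ => e.symm (Sum.inl i))
    · intro i hi
      simp only [Finset.mem_filter, Finset.mem_univ, true_and] at hi ⊢
      refine ⟨by simpa using hi, ?_⟩
      simp [wrd]
    · intro a _ b _ hab
      have := e.symm.injective hab
      exact Sum.inl_injective this
    · intro j hj
      simp only [Finset.mem_filter, Finset.mem_univ, true_and] at hj
      cases h : e j with
      | inl y =>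
        refine ⟨y, by simp only [Finset.mem_filter, Finset.mem_univ, true_and]; rw [← h]; exact hj.1, ?_⟩
        rw [← h]
        simp
      | inr y =>
        exfalso
        have := hj.2
        rw [wrd, h] at this
        simp at this
  · rw [cnt]
    apply Finset.card_bij (fun i _ => e.symm (Sum.inr i))
    · intro i hi
      simp only [Finset.mem_filter, Finset.mem_univ, true_and] at hi ⊢
      refine ⟨by simpa using hi, ?_⟩
      simp [wrd]
    · intro a _ b _ hab
      have := e.symm.injective hab
      exact Sum.inr_injective this
    · intro j hj
      simp only [Finset.mem_filter, Finset.mem_univ, true_and] at hj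
      cases h : e j with
      | inr y =>
        refine ⟨y, by simp only [Finset.mem_filter, Finset.mem_univ, true_and]; rw [← h]; exact hj.1, ?_⟩
        rw [← h]
        simp
      | inl y =>
        exfalso
        have := hj.2
        rw [wrd, h] at this
        simp at this

lemma filter_threshold {d : ℕ} (w : OSI d → ℝ) (e : Fin (d + d) ≃ OSI d) (t : ℝ) (k : ℕ)
    (hiff : ∀ j : Fin (d + d), w (e j) ≤ t ↔ (j : ℕ) < k) (c : Bool) :
    (Finset.univ.filter fun j : Fin (d + d) => w (e j) ≤ t ∧ wrd e j = c)
      = (Finset.univ.filter fun j : Fin (d + d) => (j : ℕ) < k ∧ wrd e j = c) := by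
  classical
  apply Finset.filter_congr
  intro j _
  rw [hiff j]

lemma mem_Aset_iff_ballot {d : ℕ} (e : Fin (d + d) ≃ OSI d) (w : OSI d → ℝ)
    (hw : w ∈ E e) : w ∈ Aset d ↔ ballotW (wrd e) := by
  classical
  have hs : StrictMono (w ∘ e) := hw
  rw [Aset, Set.mem_setOf_eq, sort_dom_iff]
  constructor
  · intro hA k
    rcases Nat.eq_zero_or_pos k with rfl | hk
    · simp
    rcases Nat.eq_zero_or_pos (d + d) with hN | hN
    · have : (Finset.univ : Finset (Fin (d + d))) = ∅ := by
        apply Finset.univ_eq_empty_iff.mpr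
        rw [hN]
        infer_instance
      simp [this]
    · set m := min (k - 1) (d + d - 1) with hm
      set kk : Fin (d + d) := ⟨m, by omega⟩ with hkk
      set t := w (e kk) with ht
      have hiff : ∀ j : Fin (d + d), w (e j) ≤ t ↔ (j : ℕ) < k := by
        intro j
        rw [ht]
        have : w (e j) ≤ w (e kk) ↔ j ≤ kk := hs.le_iff_le
        rw [this, Fin.le_def]
        have hj := j.isLt
        simp only [hkk]
        omega
      have h := hA t
      rw [(cnt_side w e t).1, (cnt_side w e t).2,
        filter_threshold w e t k hiff false, filter_threshold w e t k hiff true] at h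
      exact h
  · intro hB t
    set F := Finset.univ.filter (fun j : Fin (d + d) => w (e j) ≤ t) with hF
    rcases F.eq_empty_or_nonempty with hFe | hne
    · have hiff : ∀ j : Fin (d + d), w (e j) ≤ t ↔ (j : ℕ) < 0 := by
        intro j
        simp only [Nat.not_lt_zero, iff_false]
        intro hle
        have : j ∈ F := by
          rw [hF]
          simp [hle]
        rw [hFe] at this
        simp at this
      rw [(cnt_side w e t).1, (cnt_side w e t).2,
        filter_threshold w e t 0 hiff false, filter_threshold w e t 0 hiff true]
      exact hB 0
    · set kk := F.max' hne with hkk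
      have hkmem : kk ∈ F := F.max'_mem hne
      have hkt : w (e kk) ≤ t := by
        rw [hF] at hkmem
        simpa using hkmem
      have hiff : ∀ j : Fin (d + d), w (e j) ≤ t ↔ (j : ℕ) < (kk : ℕ) + 1 := by
        intro j
        constructor
        · intro hle
          have : j ∈ F := by rw [hF]; simp [hle]
          have := F.le_max' j this
          omega
        · intro hlt
          have hjk : j ≤ kk := by
            rw [Fin.le_def]
            omega
          exact le_trans (hs.monotone (by exact_mod_cast hjk : j ≤ kk)) hkt
      rw [(cnt_side w e t).1, (cnt_side w e t).2,
        filter_threshold w e t ((kk : ℕ) + 1) hiff false,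
        filter_threshold w e t ((kk : ℕ) + 1) hiff true]
      exact hB ((kk : ℕ) + 1)


open scoped Classical

def rightEquiv (d : ℕ) : {x : OSI d // x.isRight = true} ≃ Fin d where
  toFun x := Sum.getRight x.1 x.2
  invFun i := ⟨Sum.inr i, rfl⟩
  left_inv := by
    rintro ⟨x, hx⟩
    cases x with
    | inl y => simp at hx
    | inr y => rfl
  right_inv i := rfl

def leftEquiv (d : ℕ) : {x : OSI d // x.isRight = false} ≃ Fin d where
  toFun x := Sum.getLeft x.1 (by cases hx : x.1 with
    | inl y => rfl
    | inr y => exact absurd (hx ▸ x.2) (by simp))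
  invFun i := ⟨Sum.inl i, rfl⟩
  left_inv := by
    rintro ⟨x, hx⟩
    cases x with
    | inl y => rfl
    | inr y => simp at hx
  right_inv i := rfl

lemma rightEquiv_eq {d : ℕ} {x : OSI d} {hx : x.isRight = true} {y : Fin d}
    (h : x = Sum.inr y) : rightEquiv d ⟨x, hx⟩ = y := by subst h; rfl

lemma leftEquiv_eq {d : ℕ} {x : OSI d} {hx : x.isRight = false} {y : Fin d}
    (h : x = Sum.inl y) : leftEquiv d ⟨x, hx⟩ = y := by subst h; rfl

lemma inr_rightEquiv {d : ℕ} (x : OSI d) (hx : x.isRight = true) :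
    Sum.inr (rightEquiv d ⟨x, hx⟩) = x := by
  cases x with
  | inl y => simp at hx
  | inr y => rfl

lemma inl_leftEquiv {d : ℕ} (x : OSI d) (hx : x.isRight = false) :
    Sum.inl (leftEquiv d ⟨x, hx⟩) = x := by
  cases x with
  | inl y => rfl
  | inr y => simp at hx

lemma trues_wrd {d : ℕ} (e : Fin (d + d) ≃ OSI d) :
    (Finset.univ.filter fun j => wrd e j = true).card = d := by
  have h : {j : Fin (d + d) // wrd e j = true} ≃ Fin d :=
    (Equiv.subtypeEquiv e (fun j => Iff.rfl)).trans (rightEquiv d)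
  rw [← Fintype.card_subtype, Fintype.card_congr h, Fintype.card_fin]

/-- the permutation associated to a word and a pair of bijections -/
def mkPerm {d : ℕ} (s : Fin (d + d) → Bool)
    (g : {j : Fin (d + d) // s j = true} ≃ Fin d)
    (f : {j : Fin (d + d) // ¬ s j = true} ≃ Fin d) : Fin (d + d) ≃ OSI d :=
  (Equiv.sumCompl (fun j => s j = true)).symm.trans
    ((Equiv.sumCongr g f).trans (Equiv.sumComm (Fin d) (Fin d)))

lemma mkPerm_pos {d : ℕ} (s : Fin (d + d) → Bool) (g) (f) {j : Fin (d + d)}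
    (h : s j = true) : mkPerm s g f j = Sum.inr (g ⟨j, h⟩) := by
  rw [mkPerm]
  simp only [Equiv.trans_apply]
  rw [Equiv.sumCompl_symm_apply_of_pos (p := fun j => s j = true) h]
  rfl

lemma mkPerm_neg {d : ℕ} (s : Fin (d + d) → Bool) (g) (f) {j : Fin (d + d)}
    (h : ¬ s j = true) : mkPerm s g f j = Sum.inl (f ⟨j, h⟩) := by
  rw [mkPerm]
  simp only [Equiv.trans_apply]
  rw [Equiv.sumCompl_symm_apply_of_neg (p := fun j => s j = true) h]
  rfl

def fiberEquiv {d : ℕ} (s : Fin (d + d) → Bool) :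
    (({j : Fin (d + d) // s j = true} ≃ Fin d) × ({j : Fin (d + d) // ¬ s j = true} ≃ Fin d))
      ≃ {e : Fin (d + d) ≃ OSI d // wrd e = s} where
  toFun gf := ⟨mkPerm s gf.1 gf.2, by
    funext j
    by_cases h : s j = true
    · rw [wrd, mkPerm_pos s gf.1 gf.2 h, h]
      rfl
    · rw [wrd, mkPerm_neg s gf.1 gf.2 h]
      simp only [Sum.isRight_inl]
      exact (Bool.not_eq_true _).mp h |>.symm⟩
  invFun e :=
    ((Equiv.subtypeEquiv e.1 (fun j => by
        rw [show ((e : Fin (d + d) ≃ OSI d) j).isRight = wrd e.1 j from rfl, e.2])).trans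
      (rightEquiv d),
     (Equiv.subtypeEquiv e.1 (fun j => by
        rw [show ((e : Fin (d + d) ≃ OSI d) j).isRight = wrd e.1 j from rfl, e.2]
        rw [Bool.not_eq_true])).trans
      (leftEquiv d))
  left_inv := by
    rintro ⟨g, f⟩
    have h1 : ∀ (j : Fin (d + d)) (hj : s j = true) (pf),
        rightEquiv d ⟨mkPerm s g f j, pf⟩ = g ⟨j, hj⟩ :=
      fun j hj pf => rightEquiv_eq (mkPerm_pos s g f hj)
    have h2 : ∀ (j : Fin (d + d)) (hj : ¬ s j = true) (pf),
        leftEquiv d ⟨mkPerm s g f j, pf⟩ = f ⟨j, hj⟩ :=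
      fun j hj pf => leftEquiv_eq (mkPerm_neg s g f hj)
    refine Prod.ext ?_ ?_
    · apply Equiv.ext
      rintro ⟨j, hj⟩
      simp only [Equiv.trans_apply, Equiv.subtypeEquiv_apply]
      exact h1 j hj _
    · apply Equiv.ext
      rintro ⟨j, hj⟩
      simp only [Equiv.trans_apply, Equiv.subtypeEquiv_apply]
      exact h2 j hj _
  right_inv := by
    rintro ⟨e, he⟩
    apply Subtype.ext
    apply Equiv.ext
    intro j
    by_cases h : s j = true
    · rw [mkPerm_pos _ _ _ h]
      simp only [Equiv.trans_apply, Equiv.subtypeEquiv_apply]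
      exact inr_rightEquiv (e j) _
    · rw [mkPerm_neg _ _ _ h]
      simp only [Equiv.trans_apply, Equiv.subtypeEquiv_apply]
      exact inl_leftEquiv (e j) _

lemma card_fiber {d : ℕ} (s : Fin (d + d) → Bool)
    (hts : (Finset.univ.filter fun j => s j = true).card = d) :
    Fintype.card {e : Fin (d + d) ≃ OSI d // wrd e = s} = d.factorial * d.factorial := by
  rw [← Fintype.card_congr (fiberEquiv s), Fintype.card_prod]
  have h1 : Fintype.card {j : Fin (d + d) // s j = true} = d := by
    rw [Fintype.card_subtype]
    exact hts
  have h2 : Fintype.card {j : Fin (d + d) // ¬ s j = true} = d := by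
    rw [Fintype.card_subtype_compl, h1, Fintype.card_fin]
    omega
  rw [Fintype.card_equiv (Fintype.equivFinOfCardEq h1),
    Fintype.card_equiv (Fintype.equivFinOfCardEq h2), h1, h2]

lemma card_good (d : ℕ) :
    (Finset.univ.filter fun e : Fin (d + d) ≃ OSI d => ballotW (wrd e)).card
      = (Finset.univ.filter fun s : Fin (d + d) → Bool =>
          ballotW s ∧ (Finset.univ.filter fun j => s j = true).card = d).card
        * (d.factorial * d.factorial) := by
  rw [Finset.card_eq_sum_card_fiberwise (f := wrd)
    (t := Finset.univ.filter fun s : Fin (d + d) → Bool =>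
      ballotW s ∧ (Finset.univ.filter fun j => s j = true).card = d)
    (fun e he => by
      simp only [Finset.mem_coe, Finset.mem_filter, Finset.mem_univ, true_and] at he ⊢
      exact ⟨he, trues_wrd e⟩)]
  rw [Finset.sum_congr rfl (fun s hs => ?_), Finset.sum_const, smul_eq_mul]
  simp only [Finset.mem_filter, Finset.mem_univ, true_and] at hs
  have heq : ((Finset.univ.filter fun e : Fin (d + d) ≃ OSI d => ballotW (wrd e)).filter
      fun e => wrd e = s) = Finset.univ.filter fun e : Fin (d + d) ≃ OSI d => wrd e = s := by
    ext e
    simp only [Finset.mem_filter, Finset.mem_univ, true_and, and_iff_right_iff_imp]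
    intro hw
    rw [hw]
    exact hs.1
  rw [heq, ← Fintype.card_subtype, card_fiber s hs.2]


open DyckStep

lemma count_take_list {α : Type*} [DecidableEq α] (l : List α) (c : α) (k : ℕ) :
    ((l.take k).count c)
      = (Finset.univ.filter fun j : Fin l.length => (j : ℕ) < k ∧ l.get j = c).card := by
  induction l generalizing k with
  | nil => simp
  | cons a l ih =>
    cases k with
    | zero => simp
    | succ k =>
      rw [List.take_succ_cons, List.count_cons, ih k]
      simp only [List.length_cons]
      rw [Finset.card_filter, Finset.card_filter, Fin.sum_univ_succ]
      simp only [Fin.val_zero, Nat.zero_lt_succ, true_and, List.get_cons_zero,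
        Fin.val_succ, List.get_cons_succ, Nat.succ_lt_succ_iff, beq_iff_eq]
      rw [add_comm]
      congr 1

lemma filter_card_cast {m n : ℕ} (h : m = n) (P : Fin n → Prop) [DecidablePred P] :
    (Finset.univ.filter P).card = (Finset.univ.filter fun j : Fin m => P (Fin.cast h j)).card := by
  subst h
  rfl

def toWord {d : ℕ} (s : Fin (d + d) → Bool) : List DyckStep :=
  List.ofFn (fun j => if s j then U else D)

lemma length_toWord {d : ℕ} (s : Fin (d + d) → Bool) : (toWord s).length = d + d :=
  List.length_ofFn

lemma get_toWord {d : ℕ} (s : Fin (d + d) → Bool) (i : Fin (toWord s).length) :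
    (toWord s).get i = if s (Fin.cast (length_toWord s) i) then U else D := by
  simp only [toWord, List.get_ofFn]
  exact List.get_ofFn _ i

lemma count_take_toWord {d : ℕ} (s : Fin (d + d) → Bool) (k : ℕ) (c : Bool) :
    ((toWord s).take k).count (if c then U else D)
      = (Finset.univ.filter fun j : Fin (d + d) => (j : ℕ) < k ∧ s j = c).card := by
  rw [count_take_list, filter_card_cast (length_toWord s).symm]
  congr 1
  apply Finset.filter_congr
  intro j _
  have hval : Fin.cast (length_toWord s) (Fin.cast (length_toWord s).symm j) = j := by
    apply Fin.ext
    simp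
  rw [get_toWord, hval, Fin.coe_cast]
  apply and_congr_right
  intro _
  cases c <;> cases hs : s j <;> simp [hs]

lemma count_take_toWord_U {d : ℕ} (s : Fin (d + d) → Bool) (k : ℕ) :
    ((toWord s).take k).count U
      = (Finset.univ.filter fun j : Fin (d + d) => (j : ℕ) < k ∧ s j = true).card :=
  count_take_toWord s k true

lemma count_take_toWord_D {d : ℕ} (s : Fin (d + d) → Bool) (k : ℕ) :
    ((toWord s).take k).count D
      = (Finset.univ.filter fun j : Fin (d + d) => (j : ℕ) < k ∧ s j = false).card :=
  count_take_toWord s k false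

lemma count_toWord {d : ℕ} (s : Fin (d + d) → Bool) (c : Bool) :
    (toWord s).count (if c then U else D)
      = (Finset.univ.filter fun j : Fin (d + d) => s j = c).card := by
  have h1 : (toWord s).count (if c then U else D)
      = ((toWord s).take (d + d)).count (if c then U else D) := by
    rw [← length_toWord s, List.take_length]
  rw [h1, count_take_toWord]
  congr 1
  apply Finset.filter_congr
  intro j _
  simp [j.isLt]

lemma false_card_of {d : ℕ} {s : Fin (d + d) → Bool}
    (h : (Finset.univ.filter fun j => s j = true).card = d) :
    (Finset.univ.filter fun j => s j = false).card = d := by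
  have := Finset.card_filter_add_card_filter_not
    (s := (Finset.univ : Finset (Fin (d + d)))) (p := fun j => s j = true)
  have heq : (Finset.univ.filter fun j : Fin (d + d) => ¬ s j = true)
      = Finset.univ.filter fun j => s j = false := by
    apply Finset.filter_congr
    intro j _
    simp
  rw [heq, h, Finset.card_univ, Fintype.card_fin] at this
  omega

lemma count_take_dyck {d : ℕ} (l : List DyckStep) (hlen : l.length = d + d) (k : ℕ) (c : Bool) :
    (Finset.univ.filter fun j : Fin (d + d) =>
        (j : ℕ) < k ∧ (decide (l.get (Fin.cast hlen.symm j) = U)) = c).card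
      = ((l.take k).count (if c then U else D)) := by
  rw [count_take_list, filter_card_cast hlen.symm]
  congr 1
  apply Finset.filter_congr
  intro j _
  rw [Fin.coe_cast]
  apply and_congr_right
  intro _
  cases c <;> cases hget : l.get (Fin.cast hlen.symm j) <;> simp [hget]

lemma count_dyck {d : ℕ} (l : List DyckStep) (hlen : l.length = d + d) (c : Bool) :
    (Finset.univ.filter fun j : Fin (d + d) =>
        (decide (l.get (Fin.cast hlen.symm j) = U)) = c).card
      = (l.count (if c then U else D)) := by
  have h1 : l.count (if c then U else D) = (l.take (d + d)).count (if c then U else D) := by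
    rw [← hlen, List.take_length]
  rw [h1, ← count_take_dyck l hlen (d + d) c]
  congr 1
  apply Finset.filter_congr
  intro j _
  simp [j.isLt]

lemma step_round (l : List DyckStep) (i i' : Fin l.length) (h : (i : ℕ) = (i' : ℕ)) :
    (if decide (l.get i = U) = true then U else D) = l.get i' := by
  have hii : i = i' := Fin.ext h
  subst hii
  cases hg : l.get i <;> simp [hg]

lemma decide_round {d : ℕ} (s : Fin (d + d) → Bool) (i : Fin (toWord s).length)
    (j : Fin (d + d)) (h : (i : ℕ) = (j : ℕ)) :
    decide ((toWord s).get i = U) = s j := by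
  rw [get_toWord]
  have hc : Fin.cast (length_toWord s) i = j := Fin.ext (by simpa using h)
  rw [hc]
  cases s j <;> simp

lemma dyck_length {p : DyckWord} {d : ℕ} (h : p.semilength = d) : p.toList.length = d + d := by
  have := p.two_mul_semilength_eq_length
  omega

noncomputable def ballotEquiv (d : ℕ) :
    {s : Fin (d + d) → Bool //
        ballotW s ∧ (Finset.univ.filter fun j => s j = true).card = d}
      ≃ {p : DyckWord // p.semilength = d} where
  toFun sp := ⟨⟨toWord sp.1, by
      show (toWord sp.1).count U = (toWord sp.1).count D
      rw [show (U : DyckStep) = if true then U else D from rfl, count_toWord,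
        show (D : DyckStep) = if false then U else D from rfl, count_toWord,
        sp.2.2, false_card_of sp.2.2], by
      intro i
      show ((toWord sp.1).take i).count D ≤ ((toWord sp.1).take i).count U
      rw [count_take_toWord_U, count_take_toWord_D]
      exact sp.2.1 i⟩, by
      show (toWord sp.1).count U = d
      rw [show (U : DyckStep) = if true then U else D from rfl, count_toWord, sp.2.2]⟩
  invFun pp :=
    ⟨fun j => decide (pp.1.toList.get (Fin.cast (dyck_length pp.2).symm j) = U), by
      constructor
      · intro k
        rw [count_take_dyck pp.1.toList (dyck_length pp.2) k false,
          count_take_dyck pp.1.toList (dyck_length pp.2) k true]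
        exact pp.1.count_D_le_count_U k
      · rw [count_dyck pp.1.toList (dyck_length pp.2) true]
        exact pp.2⟩
  left_inv := by
    rintro ⟨s, hs⟩
    apply Subtype.ext
    funext j
    exact decide_round s _ j (by simp)
  right_inv := by
    rintro ⟨p, hp⟩
    apply Subtype.ext
    apply DyckWord.ext
    apply List.ext_get
    · rw [length_toWord, dyck_length hp]
    · intro n h1 h2
      rw [get_toWord]
      exact step_round p.toList _ ⟨n, h2⟩ (by simp)

lemma card_ballot (d : ℕ) :
    (Finset.univ.filter fun s : Fin (d + d) → Bool =>
        ballotW s ∧ (Finset.univ.filter fun j => s j = true).card = d).card = catalan d := by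
  rw [← Fintype.card_subtype, Fintype.card_congr (ballotEquiv d),
    DyckWord.card_dyckWord_semilength_eq_catalan]


lemma Aset_preimage (d : ℕ) :
    (MeasurableEquiv.sumPiEquivProdPi (fun _ : OSI d => ℝ)) ⁻¹'
      {p : (Fin d → ℝ) × (Fin d → ℝ) | ∀ i, sortVec p.2 i ≤ sortVec p.1 i} = Aset d := rfl

lemma muI_Aset (d : ℕ) :
    ((unifPi d).prod (unifPi d)) {p | ∀ i, sortVec p.2 i ≤ sortVec p.1 i} = muI d (Aset d) := by
  have h := (measurePreserving_sumPiEquivProdPi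
    (fun _ : OSI d => unif)).measure_preimage (measurableSet_S d).nullMeasurableSet
  rw [Aset_preimage] at h
  exact h.symm

lemma compl_E_null (d : ℕ) : muI d (⋃ e : Fin (d + d) ≃ OSI d, E e)ᶜ = 0 := by
  refine measure_mono_null ?_ (null_noninj d)
  intro w hw
  simp only [Set.mem_compl_iff, Set.mem_iUnion, not_exists] at hw
  intro hinj
  obtain ⟨e', he'⟩ := exists_E d hinj
  exact hw e' he'

lemma key_arith (d : ℕ) :
    (d + 1) * (catalan d * (d.factorial * d.factorial)) = (d + d).factorial := by
  have h1 := succ_mul_catalan_eq_centralBinom d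
  have h2 : d.centralBinom = (2 * d).choose d := rfl
  have h3 := Nat.choose_mul_factorial_mul_factorial
    (show d ≤ 2 * d by omega)
  have h4 : 2 * d - d = d := by omega
  rw [h4] at h3
  have h5 : d + d = 2 * d := by omega
  rw [h5]
  calc (d + 1) * (catalan d * (d.factorial * d.factorial))
      = ((d + 1) * catalan d) * d.factorial * d.factorial := by ring
    _ = (2 * d).choose d * d.factorial * d.factorial := by rw [h1, h2]
    _ = (2 * d).factorial := h3

lemma measure_Aset (d : ℕ) : ((d : ℝ≥0∞) + 1) * muI d (Aset d) = 1 := by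
  classical
  set e₀ : Fin (d + d) ≃ OSI d := finSumFinEquiv.symm with he₀
  set c := muI d (E e₀) with hc
  set Uu := ⋃ e : Fin (d + d) ≃ OSI d, E e with hU
  have hUm : MeasurableSet Uu := MeasurableSet.iUnion fun e => measurableSet_E e
  have hdiff : muI d (Aset d \ Uu) = 0 :=
    measure_mono_null (fun w hw => hw.2) (compl_E_null d)
  have h1 : muI d (Aset d) = muI d (Aset d ∩ Uu) := by
    have := measure_inter_add_diff (μ := muI d) (Aset d) hUm
    rw [hdiff, add_zero] at this
    exact this.symm
  have hAE : ∀ e : Fin (d + d) ≃ OSI d,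
      Aset d ∩ E e = if ballotW (wrd e) then E e else ∅ := by
    intro e
    split_ifs with h
    · ext w
      exact ⟨fun hw => hw.2, fun hw => ⟨(mem_Aset_iff_ballot e w hw).mpr h, hw⟩⟩
    · ext w
      simp only [Set.mem_inter_iff, Set.mem_empty_iff_false, iff_false, not_and]
      intro hA hw
      exact h ((mem_Aset_iff_ballot e w hw).mp hA)
  have h2 : Aset d ∩ Uu = ⋃ e : Fin (d + d) ≃ OSI d, Aset d ∩ E e := by
    rw [hU, Set.inter_iUnion]
  have h3 : muI d (⋃ e : Fin (d + d) ≃ OSI d, Aset d ∩ E e)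
      = ∑ e : Fin (d + d) ≃ OSI d, muI d (Aset d ∩ E e) := by
    rw [measure_iUnion
      (fun e e' hne => Disjoint.mono Set.inter_subset_right Set.inter_subset_right
        (E_disjoint hne))
      (fun e => by
        rw [hAE e]
        split_ifs
        · exact measurableSet_E e
        · exact MeasurableSet.empty), tsum_fintype]
  have h4 : ∀ e : Fin (d + d) ≃ OSI d,
      muI d (Aset d ∩ E e) = if ballotW (wrd e) then c else 0 := by
    intro e
    rw [hAE e]
    split_ifs
    · exact measure_E_const e e₀
    · exact measure_empty
  rw [h1, h2, h3, Finset.sum_congr rfl fun e _ => h4 e, ← Finset.sum_filter,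
    Finset.sum_const, card_good, card_ballot, nsmul_eq_mul]
  have harith := key_arith d
  have hmE := measure_E_eq e₀
  rw [← hc] at hmE
  calc ((d : ℝ≥0∞) + 1) * (((catalan d * (d.factorial * d.factorial) : ℕ) : ℝ≥0∞) * c)
      = (((d + 1) * (catalan d * (d.factorial * d.factorial)) : ℕ) : ℝ≥0∞) * c := by
        push_cast
        ring
    _ = (((d + d).factorial : ℕ) : ℝ≥0∞) * c := by rw [harith]
    _ = 1 := hmE

lemma biformOrder_val (d : ℕ) : biformOrder d = ((d : ℝ) + 1)⁻¹ := by
  have hA : muI d (Aset d) = ((d : ℝ≥0∞) + 1)⁻¹ := by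
    apply ENNReal.eq_inv_of_mul_eq_one_left
    rw [mul_comm]
    exact measure_Aset d
  rw [biformOrder_eq_prod, muI_Aset, hA]
  have hcast : ((d : ℝ≥0∞) + 1) = ((d + 1 : ℕ) : ℝ≥0∞) := by push_cast; ring
  rw [hcast, ENNReal.toReal_inv, ENNReal.toReal_natCast]
  push_cast
  ring

lemma nat_ineq (d : ℕ) (hd : 2 ≤ d) : d + 1 < 2 ^ d := by
  induction d with
  | zero => omega
  | succ n ih =>
    by_cases h : 2 ≤ n
    · have h1 := ih h
      have h2 : 2 ^ (n + 1) = 2 * 2 ^ n := by ring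
      omega
    · have hn : n = 1 := by omega
      subst hn
      norm_num

theorem stmt10 (d : ℕ) (hd : 2 ≤ d) :
    (2 ^ d * biformOrder d - 1) / (2 ^ (d - 1) - 1)
        = (2 ^ d - (d + 1)) / ((2 ^ (d - 1) - 1) * (d + 1)) ∧
      0 < (2 ^ d * biformOrder d - 1) / (2 ^ (d - 1) - 1) := by
  have hb := biformOrder_val d
  have h2d : (d : ℝ) + 1 < 2 ^ d := by
    have := nat_ineq d hd
    exact_mod_cast this
  have hx : (1 : ℝ) < 2 ^ (d - 1) := by
    have h1 : (1 : ℕ) < 2 ^ (d - 1) := by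
      have : 0 < d - 1 := by omega
      calc 1 < 2 ^ 1 := by norm_num
        _ ≤ 2 ^ (d - 1) := Nat.pow_le_pow_right (by norm_num) (by omega)
    exact_mod_cast h1
  have hD : (0 : ℝ) < (d : ℝ) + 1 := by positivity
  have heq : (2 ^ d * biformOrder d - 1) / (2 ^ (d - 1) - 1)
      = (2 ^ d - ((d : ℝ) + 1)) / ((2 ^ (d - 1) - 1) * ((d : ℝ) + 1)) := by
    have hD0 : (d : ℝ) + 1 ≠ 0 := by linarith
    have hsplit : (2 : ℝ) ^ d * ((d : ℝ) + 1)⁻¹ - 1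
        = (2 ^ d - ((d : ℝ) + 1)) / ((d : ℝ) + 1) := by
      field_simp
    rw [hb, hsplit, div_div, mul_comm ((d : ℝ) + 1)]
  refine ⟨heq, ?_⟩
  rw [heq]
  apply div_pos
  · linarith
  · apply mul_pos <;> linarith
end
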